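/- Fix C ≥ 1 and κ > 0. For all real x, t ≥ 1 one has the uniform estimate #{n ≤ x : #{p prime : p | n, p ≤ t} ≥ κ·log t} ≪_{C,κ} x·t^{−C}, where the implied constant depends only on C and κ. -/

import Mathlib

open Finset

noncomputable def g (p : ℕ) : ℝ := if p.Prime then (p : ℝ)⁻¹ else 0

lemma g_nonneg (p : ℕ) : 0 ≤ g p := by
  unfold g; split <;> positivity

/-- Chebyshev-type: sum of log p over primes ≤ M is at most M log 4. -/
lemma cheb (M : ℕ) : ∑ p ∈ (Finset.range (M+1)).filter Nat.Prime, Real.log p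
    ≤ M * Real.log 4 := by
  have hp0 : (0:ℝ) < (primorial M : ℝ) := by
    exact_mod_cast (primorial_pos M)
  have h1 : Real.log (primorial M) ≤ Real.log ((4:ℕ) ^ M) := by
    apply Real.log_le_log hp0
    exact_mod_cast primorial_le_4_pow M
  rw [primorial] at h1
  push_cast at h1
  rw [Real.log_prod (fun p hp => by
      simp only [mem_filter] at hp
      exact_mod_cast hp.2.ne_zero), Real.log_pow] at h1
  simpa using h1

/-- block bound: sum of g over (2^k, 2^(k+1)] is at most 4/k. -/
lemma block (k : ℕ) (hk : 1 ≤ k) :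
    ∑ p ∈ Finset.Ico (2^k+1) (2^(k+1)+1), g p ≤ 4 / k := by
  classical
  set P := (Finset.Ico (2^k+1) (2^(k+1)+1)).filter Nat.Prime with hP
  have hsum : ∑ p ∈ Finset.Ico (2^k+1) (2^(k+1)+1), g p = ∑ p ∈ P, (p:ℝ)⁻¹ := by
    rw [hP, Finset.sum_filter]
    apply Finset.sum_congr rfl
    intro p _
    unfold g; split <;> simp_all
  -- card bound
  have hcard : (P.card : ℝ) * (k * Real.log 2) ≤ 2^(k+2) * Real.log 2 := by
    have h1 : (P.card : ℝ) * (k * Real.log 2) ≤ ∑ p ∈ P, Real.log p := by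
      calc (P.card : ℝ) * (k * Real.log 2) = ∑ _p ∈ P, (k * Real.log 2) := by
            rw [Finset.sum_const, nsmul_eq_mul]
        _ ≤ ∑ p ∈ P, Real.log p := ?_
      apply Finset.sum_le_sum
      intro p hp
      simp only [hP, mem_filter, Finset.mem_Ico] at hp
      have h2k : ((2:ℝ))^k ≤ (p:ℝ) := by
        have : (2^k : ℕ) ≤ p := by omega
        exact_mod_cast this
      calc (k : ℝ) * Real.log 2 = Real.log (2^k) := by rw [Real.log_pow]
        _ ≤ Real.log p := Real.log_le_log (by positivity) h2k
    have h2 : ∑ p ∈ P, Real.log p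
        ≤ ∑ p ∈ (Finset.range (2^(k+1)+1)).filter Nat.Prime, Real.log p := by
      apply Finset.sum_le_sum_of_subset_of_nonneg
      · intro p hp
        simp only [hP, mem_filter, Finset.mem_Ico, Finset.mem_range] at hp ⊢
        exact ⟨by omega, hp.2⟩
      · intro p hp _
        simp only [mem_filter] at hp
        have : (1:ℝ) ≤ p := by exact_mod_cast hp.2.one_lt.le
        exact Real.log_nonneg this
    have h3 := cheb (2^(k+1))
    have h4 : (2:ℝ)^(k+1) * Real.log 4 = 2^(k+2) * Real.log 2 := by
      rw [show (4:ℝ) = 2^2 by norm_num, Real.log_pow]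
      ring
    calc (P.card : ℝ) * (k * Real.log 2) ≤ ∑ p ∈ P, Real.log p := h1
      _ ≤ _ := h2
      _ ≤ (2^(k+1) : ℕ) * Real.log 4 := h3
      _ = 2^(k+2) * Real.log 2 := by push_cast; exact h4
  have hlog2 : (0:ℝ) < Real.log 2 := Real.log_pos (by norm_num)
  have hkpos : (0:ℝ) < k := by exact_mod_cast hk
  have hcard' : (P.card : ℝ) ≤ 2^(k+2) / k := by
    rw [le_div_iff₀ hkpos]
    nlinarith [hcard]
  have hterm : ∀ p ∈ P, (p:ℝ)⁻¹ ≤ ((2:ℝ)^k)⁻¹ := by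
    intro p hp
    simp only [hP, mem_filter, Finset.mem_Ico] at hp
    apply inv_anti₀ (by positivity)
    have : (2^k : ℕ) ≤ p := by omega
    exact_mod_cast this
  calc ∑ p ∈ Finset.Ico (2^k+1) (2^(k+1)+1), g p = ∑ p ∈ P, (p:ℝ)⁻¹ := hsum
    _ ≤ ∑ _p ∈ P, ((2:ℝ)^k)⁻¹ := Finset.sum_le_sum hterm
    _ = (P.card : ℝ) * ((2:ℝ)^k)⁻¹ := by rw [Finset.sum_const, nsmul_eq_mul]
    _ ≤ (2^(k+2) / k) * ((2:ℝ)^k)⁻¹ := by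
        apply mul_le_mul_of_nonneg_right hcard' (by positivity)
    _ = 4 / k := by
        field_simp
        ring

noncomputable def f (k : ℕ) : ℝ := ∑ p ∈ Finset.range (2^k+1), g p

lemma f_step (k : ℕ) (hk : 1 ≤ k) : f (k+1) ≤ f k + 4 / k := by
  have hsplit : f (k+1) = f k + ∑ p ∈ Finset.Ico (2^k+1) (2^(k+1)+1), g p := by
    unfold f
    simp only [Finset.range_eq_Ico]
    rw [← Finset.sum_Ico_consecutive g (Nat.zero_le (2^k+1))
        (by have := Nat.pow_le_pow_right (by norm_num : 1 ≤ 2) (Nat.le_succ k); omega)]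
  rw [hsplit]
  linarith [block k hk]

lemma f_mono {a b : ℕ} (h : a ≤ b) : f a ≤ f b := by
  unfold f
  apply Finset.sum_le_sum_of_subset_of_nonneg
  · apply Finset.range_subset_range.2
    have := Nat.pow_le_pow_right (by norm_num : 1 ≤ 2) h
    omega
  · exact fun p _ _ => g_nonneg p

lemma f_le (J : ℕ) (hJ : 1 ≤ J) : ∀ d : ℕ, f (J + d) ≤ f J + 4 * d / J := by
  intro d
  induction d with
  | zero => simp
  | succ d ih =>
    have hJd : 1 ≤ J + d := by omega
    have h1 := f_step (J + d) hJd
    have hJ' : (0:ℝ) < J := by exact_mod_cast hJ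
    have hJd' : (J:ℝ) ≤ (J:ℝ) + d := by have : (0:ℝ) ≤ d := Nat.cast_nonneg d; linarith
    have h2 : (4:ℝ) / (J + d) ≤ 4 / J := by gcongr <;> linarith
    have : f (J + (d+1)) = f ((J + d) + 1) := by ring_nf
    rw [this]
    push_cast at h1 h2 ⊢
    calc f ((J+d)+1) ≤ f (J+d) + 4 / ((J:ℝ)+d) := by push_cast at h1; linarith
      _ ≤ f J + 4 * d / J + 4 / J := by linarith
      _ = f J + 4 * ((d:ℝ)+1) / J := by field_simp; ring

lemma f_le' (J : ℕ) (hJ : 1 ≤ J) (k : ℕ) : f k ≤ f J + 4 * k / J := by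
  rcases le_or_gt k J with h | h
  · have : (0:ℝ) ≤ 4 * k / J := by positivity
    linarith [f_mono h]
  · have : k = J + (k - J) := by omega
    have h1 : f k ≤ f J + 4 * ((k-J : ℕ):ℝ) / J := by
      calc f k = f (J + (k - J)) := by rw [← this]
        _ ≤ _ := f_le J hJ _
    have hJpos : (0:ℝ) < J := by exact_mod_cast hJ
    have hsub : ((k - J : ℕ):ℝ) ≤ (k:ℝ) := by exact_mod_cast Nat.sub_le k J
    have h2 : (4:ℝ) * ((k-J:ℕ):ℝ) / J ≤ 4 * k / J := by gcongr
    linarith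

/-- Mertens-lite: for every ε > 0 there is B with `∑_{p ≤ t} 1/p ≤ ε log t + B`. -/
lemma mertens_lite (ε : ℝ) (hε : 0 < ε) : ∃ B : ℝ, 0 ≤ B ∧ ∀ t : ℝ, 1 ≤ t →
    ∑ p ∈ (Finset.range (⌊t⌋₊ + 1)).filter Nat.Prime, (p:ℝ)⁻¹ ≤ ε * Real.log t + B := by
  obtain ⟨J, hJ⟩ := exists_nat_gt (4 / (ε * Real.log 2) + 1)
  have hlog2 : (0:ℝ) < Real.log 2 := Real.log_pos (by norm_num)
  have hJ1 : 1 ≤ J := by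
    by_contra h
    push_neg at h
    interval_cases J
    · simp at hJ
      nlinarith [div_nonneg (by norm_num : (0:ℝ) ≤ 4) (le_of_lt (mul_pos hε hlog2))]
  have hJpos : (0:ℝ) < J := by exact_mod_cast hJ1
  have hf0 : 0 ≤ f J := Finset.sum_nonneg fun p _ => g_nonneg p
  refine ⟨f J + 4 / J + 4 / J, by positivity, ?_⟩
  intro t ht
  set M := ⌊t⌋₊ with hM
  have hM1 : 1 ≤ M := by
    rw [hM]
    exact Nat.le_floor (by exact_mod_cast ht)
  have hsum : ∑ p ∈ (Finset.range (M + 1)).filter Nat.Prime, (p:ℝ)⁻¹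
      = ∑ p ∈ Finset.range (M+1), g p := by
    rw [Finset.sum_filter]
    apply Finset.sum_congr rfl
    intro p _
    unfold g; split <;> simp_all
  set k := Nat.log 2 M + 1 with hk
  have hMk : M < 2^k := Nat.lt_pow_succ_log_self (by norm_num) M
  have hfk : ∑ p ∈ Finset.range (M+1), g p ≤ f k := by
    unfold f
    apply Finset.sum_le_sum_of_subset_of_nonneg
    · apply Finset.range_subset_range.2; omega
    · exact fun p _ _ => g_nonneg p
  have hlogt : 0 ≤ Real.log t := Real.log_nonneg ht
  have hL : (Nat.log 2 M : ℝ) * Real.log 2 ≤ Real.log t := by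
    have h1 : (2:ℕ)^(Nat.log 2 M) ≤ M := Nat.pow_log_le_self 2 (by omega)
    have h2 : ((2:ℝ))^(Nat.log 2 M) ≤ (M:ℝ) := by exact_mod_cast h1
    have h3 : (M:ℝ) ≤ t := Nat.floor_le (by linarith)
    calc (Nat.log 2 M : ℝ) * Real.log 2 = Real.log (2^(Nat.log 2 M)) := by
          rw [Real.log_pow]
      _ ≤ Real.log t := Real.log_le_log (by positivity) (by linarith)
  have hmain := f_le' J hJ1 k
  have hklt : (k:ℝ) = (Nat.log 2 M : ℝ) + 1 := by rw [hk]; push_cast; ring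
  have h5 : 4 < ((J:ℝ) - 1) * (ε * Real.log 2) := by
    have : 4 / (ε * Real.log 2) < (J:ℝ) - 1 := by linarith
    calc (4:ℝ) = 4 / (ε * Real.log 2) * (ε * Real.log 2) := by field_simp
      _ < ((J:ℝ) - 1) * (ε * Real.log 2) := by
          apply mul_lt_mul_of_pos_right this (by positivity)
  have hLpos : (0:ℝ) ≤ (Nat.log 2 M : ℝ) := Nat.cast_nonneg _
  have h4 : 4 * (Nat.log 2 M : ℝ) / J ≤ ε * Real.log t := by
    rw [div_le_iff₀ hJpos]
    have hεL : ε * ((Nat.log 2 M : ℝ) * Real.log 2) ≤ ε * Real.log t :=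
      mul_le_mul_of_nonneg_left hL hε.le
    have h7 := mul_le_mul_of_nonneg_left h5.le hLpos
    have h8 := mul_le_mul_of_nonneg_left hεL (le_of_lt hJpos)
    have h9 : 0 ≤ ε * Real.log 2 * (Nat.log 2 M : ℝ) := by positivity
    nlinarith [h7, h8, h9]
  have h6 : 4 * (k:ℝ) / J = 4 * (Nat.log 2 M : ℝ) / J + 4 / J := by
    rw [hklt]; field_simp
  calc ∑ p ∈ (Finset.range (M + 1)).filter Nat.Prime, (p:ℝ)⁻¹
      = ∑ p ∈ Finset.range (M+1), g p := hsum
    _ ≤ f k := hfk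
    _ ≤ f J + 4 * k / J := hmain
    _ = f J + 4 * (Nat.log 2 M : ℝ) / J + 4 / J := by rw [h6]; ring
    _ ≤ f J + ε * Real.log t + 4 / J := by linarith
    _ ≤ ε * Real.log t + (f J + 4 / J + 4 / J) := by
        have : (0:ℝ) ≤ 4 / J := by positivity
        linarith


/-- Few numbers with many small prime factors: for fixed `C ≥ 1` and `κ > 0`, uniformly in
`x, t ≥ 1`, `#{n ≤ x : #{p prime : p | n, p ≤ t} ≥ κ log t} ≪_{C,κ} x t^{-C}`. -/
theorem few_numbers_with_large_omega (C κ : ℝ) (hC : 1 ≤ C) (hκ : 0 < κ) :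
    ∃ K : ℝ, 0 < K ∧ ∀ x t : ℝ, 1 ≤ x → 1 ≤ t →
      (Nat.card {n : ℕ | 1 ≤ n ∧ (n : ℝ) ≤ x ∧
          κ * Real.log t ≤ ((n.primeFactors.filter (fun p : ℕ => (p : ℝ) ≤ t)).card : ℝ)} : ℝ)
        ≤ K * x * t ^ (-C) := by
  classical
  set c : ℝ := Real.exp ((C+1)/κ) - 1 with hc
  have hcpos : 0 < c := by
    have h1 : (0:ℝ) < (C+1)/κ := by positivity
    have h2 : Real.exp 0 < Real.exp ((C+1)/κ) := Real.exp_lt_exp.2 h1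
    rw [Real.exp_zero] at h2
    simp only [hc]
    linarith
  obtain ⟨B, hB0, hB⟩ := mertens_lite c⁻¹ (by positivity)
  refine ⟨Real.exp (c * B), Real.exp_pos _, ?_⟩
  intro x t hx ht
  have ht0 : (0:ℝ) < t := by linarith
  have hx0 : (0:ℝ) ≤ x := by linarith
  set N := ⌊x⌋₊ with hN
  set M := ⌊t⌋₊ with hM
  have hN1 : 1 ≤ N := Nat.le_floor (by exact_mod_cast hx)
  have hNx : (N:ℝ) ≤ x := Nat.floor_le hx0
  set F := (Finset.Icc 1 N).filter (fun n =>
    κ * Real.log t ≤ ((n.primeFactors.filter (fun p : ℕ => (p:ℝ) ≤ t)).card : ℝ)) with hF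
  -- identify the set with F
  have hset : {n : ℕ | 1 ≤ n ∧ (n : ℝ) ≤ x ∧
      κ * Real.log t ≤ ((n.primeFactors.filter (fun p : ℕ => (p : ℝ) ≤ t)).card : ℝ)}
      = (↑F : Set ℕ) := by
    ext n
    simp only [hF, Finset.coe_filter, Set.mem_setOf_eq, Finset.mem_Icc]
    constructor
    · rintro ⟨h1, h2, h3⟩
      exact ⟨⟨h1, Nat.le_floor h2⟩, h3⟩
    · rintro ⟨⟨h1, h2⟩, h3⟩
      refine ⟨h1, ?_, h3⟩
      calc (n:ℝ) ≤ N := by exact_mod_cast h2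
        _ ≤ x := hNx
  have hcard : (Nat.card {n : ℕ | 1 ≤ n ∧ (n : ℝ) ≤ x ∧
      κ * Real.log t ≤ ((n.primeFactors.filter (fun p : ℕ => (p : ℝ) ≤ t)).card : ℝ)} : ℝ)
      = (F.card : ℝ) := by
    rw [hset]
    simp [Nat.card_eq_finsetCard]
  rw [hcard]
  set Pt := (Finset.range (M+1)).filter Nat.Prime with hPt
  set D := (Finset.Icc 1 N).filter (fun d : ℕ =>
    (∏ p ∈ d.primeFactors, p) = d ∧ ∀ p : ℕ, p ∈ d.primeFactors → (p:ℝ) ≤ t) with hD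
  set E : ℝ := Real.exp ((C+1) * Real.log t) with hE
  have hEpos : 0 < E := Real.exp_pos _
  -- Step 1
  have h1 : (F.card : ℝ) * E ≤ ∑ n ∈ Finset.Icc 1 N,
      (c+1)^((n.primeFactors.filter (fun p : ℕ => (p:ℝ) ≤ t)).card) := by
    have hE' : ∀ n ∈ F, E ≤ (c+1)^((n.primeFactors.filter (fun p : ℕ => (p:ℝ) ≤ t)).card) := by
      intro n hn
      have hω := (Finset.mem_filter.1 hn).2
      have hc1 : c + 1 = Real.exp ((C+1)/κ) := by rw [hc]; ring
      rw [hc1, ← Real.exp_nat_mul, hE]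
      apply Real.exp_le_exp.2
      have hCκ : (0:ℝ) < (C+1)/κ := by positivity
      calc (C+1) * Real.log t = (κ * Real.log t) * ((C+1)/κ) := by field_simp
        _ ≤ ((n.primeFactors.filter (fun p : ℕ => (p:ℝ) ≤ t)).card : ℝ) * ((C+1)/κ) :=
            mul_le_mul_of_nonneg_right hω hCκ.le
    calc (F.card : ℝ) * E = ∑ _n ∈ F, E := by rw [Finset.sum_const, nsmul_eq_mul]
      _ ≤ ∑ n ∈ F, (c+1)^((n.primeFactors.filter (fun p : ℕ => (p:ℝ) ≤ t)).card) :=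
          Finset.sum_le_sum hE'
      _ ≤ _ := by
          apply Finset.sum_le_sum_of_subset_of_nonneg (Finset.filter_subset _ _)
          intro n _ _
          positivity
  -- Step 2: pointwise divisor expansion
  have h2 : ∀ n ∈ Finset.Icc 1 N,
      (c+1)^((n.primeFactors.filter (fun p : ℕ => (p:ℝ) ≤ t)).card)
      ≤ ∑ d ∈ D.filter (· ∣ n), c^(d.primeFactors.card) := by
    intro n hn
    rw [Finset.mem_Icc] at hn
    set Pn := n.primeFactors.filter (fun p : ℕ => (p:ℝ) ≤ t) with hPn
    have hPnprime : ∀ p ∈ Pn, p.Prime := fun p hp =>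
      Nat.prime_of_mem_primeFactors (Finset.mem_filter.1 hp).1
    have key : (c+1)^(Pn.card) = ∑ A ∈ Pn.powerset, c^(A.card) := by
      have h := Finset.prod_add (fun _ : ℕ => c) (fun _ : ℕ => (1:ℝ)) Pn
      simp only [Finset.prod_const, one_pow, mul_one] at h
      exact h
    have hpf : ∀ A ∈ Pn.powerset, Nat.primeFactors (∏ p ∈ A, p) = A := by
      intro A hA
      exact Nat.primeFactors_prod (fun p hp => hPnprime p (Finset.mem_powerset.1 hA hp))
    have hinj : ∀ A ∈ Pn.powerset, ∀ A' ∈ Pn.powerset,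
        (∏ p ∈ A, p) = (∏ p ∈ A', p) → A = A' := by
      intro A hA A' hA' h
      rw [← hpf A hA, h, hpf A' hA']
    have himg : Pn.powerset.image (fun A => ∏ p ∈ A, p) ⊆ D.filter (· ∣ n) := by
      intro d hd
      obtain ⟨A, hA, rfl⟩ := Finset.mem_image.1 hd
      have hsub := Finset.mem_powerset.1 hA
      have hAsub : A ⊆ n.primeFactors := hsub.trans (Finset.filter_subset _ _)
      have hdvd : (∏ p ∈ A, p) ∣ n := by
        calc (∏ p ∈ A, p) ∣ ∏ p ∈ n.primeFactors, p :=
              Finset.prod_dvd_prod_of_subset A n.primeFactors (fun p => p) hAsub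
          _ ∣ n := Nat.prod_primeFactors_dvd n
      have hpos : 1 ≤ ∏ p ∈ A, p :=
        Finset.one_le_prod' (fun p hp => (hPnprime p (hsub hp)).one_lt.le)
      have hleN : (∏ p ∈ A, p) ≤ N := le_trans (Nat.le_of_dvd (by omega) hdvd) hn.2
      rw [Finset.mem_filter, hD, Finset.mem_filter, Finset.mem_Icc]
      refine ⟨⟨⟨hpos, hleN⟩, ?_, ?_⟩, hdvd⟩
      · rw [hpf A hA]
      · intro p hp
        rw [hpf A hA] at hp
        exact (Finset.mem_filter.1 (hsub hp)).2
    calc (c+1)^(Pn.card) = ∑ A ∈ Pn.powerset, c^(A.card) := key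
      _ = ∑ d ∈ Pn.powerset.image (fun A => ∏ p ∈ A, p), c^(d.primeFactors.card) := by
          rw [Finset.sum_image hinj]
          exact Finset.sum_congr rfl (fun A hA => by rw [hpf A hA])
      _ ≤ ∑ d ∈ D.filter (· ∣ n), c^(d.primeFactors.card) := by
          apply Finset.sum_le_sum_of_subset_of_nonneg himg
          intro d _ _; positivity
  -- Step 3: swap the sums
  have h3 : ∑ n ∈ Finset.Icc 1 N, ∑ d ∈ D.filter (· ∣ n), (c:ℝ)^(d.primeFactors.card)
      = ∑ d ∈ D, (c:ℝ)^(d.primeFactors.card)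
          * (((Finset.Icc 1 N).filter (fun n => d ∣ n)).card : ℝ) := by
    simp_rw [Finset.sum_filter]
    rw [Finset.sum_comm]
    apply Finset.sum_congr rfl
    intro d _
    rw [← Finset.sum_filter, Finset.sum_const, nsmul_eq_mul, mul_comm]
  -- Step 4: divisor count
  have h4 : ∀ d ∈ D, (((Finset.Icc 1 N).filter (fun n => d ∣ n)).card : ℝ) ≤ x / d := by
    intro d hd
    have hd1 : 1 ≤ d := (Finset.mem_Icc.1 (Finset.mem_filter.1 hd).1).1
    have hIcc : Finset.Icc 1 N = Finset.Ioc 0 N := by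
      ext m; simp [Nat.lt_iff_add_one_le]
    rw [hIcc, Nat.Ioc_filter_dvd_card_eq_div]
    have hd0 : (0:ℝ) < d := by exact_mod_cast hd1
    calc ((N / d : ℕ) : ℝ) ≤ (N:ℝ)/(d:ℝ) := Nat.cast_div_le
      _ ≤ x / d := by gcongr
  -- Step 5: Euler product bound
  have h5 : ∑ d ∈ D, (c:ℝ)^(d.primeFactors.card) / d ≤ ∏ p ∈ Pt, (1 + c/(p:ℝ)) := by
    have hterm : ∀ d ∈ D, (c:ℝ)^(d.primeFactors.card)/(d:ℝ) = ∏ p ∈ d.primeFactors, (c/(p:ℝ)) := by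
      intro d hd
      obtain ⟨-, hprod, -⟩ := Finset.mem_filter.1 hd
      rw [Finset.prod_div_distrib, Finset.prod_const]
      congr 1
      rw [← Nat.cast_prod]
      exact_mod_cast hprod.symm
    rw [Finset.sum_congr rfl hterm]
    have hpfsub : ∀ d ∈ D, d.primeFactors ∈ Pt.powerset := by
      intro d hd
      obtain ⟨-, -, hle⟩ := Finset.mem_filter.1 hd
      rw [Finset.mem_powerset]
      intro p hp
      rw [hPt, Finset.mem_filter, Finset.mem_range]
      have : p ≤ M := Nat.le_floor (by exact_mod_cast hle p hp)
      exact ⟨by omega, Nat.prime_of_mem_primeFactors hp⟩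
    have hinj2 : ∀ d ∈ D, ∀ d' ∈ D, d.primeFactors = d'.primeFactors → d = d' := by
      intro d hd d' hd' h
      obtain ⟨-, hprod, -⟩ := Finset.mem_filter.1 hd
      obtain ⟨-, hprod', -⟩ := Finset.mem_filter.1 hd'
      rw [← hprod, ← hprod', h]
    have himage : ∑ A ∈ D.image Nat.primeFactors, ∏ p ∈ A, (c/(p:ℝ))
        = ∑ d ∈ D, ∏ p ∈ d.primeFactors, (c/(p:ℝ)) := Finset.sum_image hinj2
    calc ∑ d ∈ D, ∏ p ∈ d.primeFactors, (c/(p:ℝ))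
        = ∑ A ∈ D.image Nat.primeFactors, ∏ p ∈ A, (c/(p:ℝ)) := himage.symm
      _ ≤ ∑ A ∈ Pt.powerset, ∏ p ∈ A, (c/(p:ℝ)) := by
          apply Finset.sum_le_sum_of_subset_of_nonneg
          · intro A hA
            obtain ⟨d, hd, rfl⟩ := Finset.mem_image.1 hA
            exact hpfsub d hd
          · intro A _ _
            apply Finset.prod_nonneg
            intro p _
            positivity
      _ = ∏ p ∈ Pt, (1 + c/(p:ℝ)) := by
          have h := Finset.prod_add (fun p : ℕ => c/(p:ℝ)) (fun _ : ℕ => (1:ℝ)) Pt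
          simp only [Finset.prod_const, one_pow, mul_one] at h
          rw [Finset.prod_congr rfl (fun p _ => by rw [add_comm]), h]
  -- Step 6: exponential bound
  have h6 : ∏ p ∈ Pt, (1 + c/(p:ℝ)) ≤ t * Real.exp (c * B) := by
    have hs : ∑ p ∈ Pt, c/(p:ℝ) ≤ Real.log t + c * B := by
      have : ∑ p ∈ Pt, c/(p:ℝ) = c * ∑ p ∈ Pt, ((p:ℝ))⁻¹ := by
        rw [Finset.mul_sum]
        exact Finset.sum_congr rfl (fun p _ => div_eq_mul_inv c _)
      rw [this]
      have := hB t ht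
      calc c * ∑ p ∈ Pt, ((p:ℝ))⁻¹ ≤ c * (c⁻¹ * Real.log t + B) :=
            mul_le_mul_of_nonneg_left this hcpos.le
        _ = Real.log t + c * B := by field_simp
    calc ∏ p ∈ Pt, (1 + c/(p:ℝ)) ≤ ∏ p ∈ Pt, Real.exp (c/(p:ℝ)) := by
          apply Finset.prod_le_prod
          · intro p _; positivity
          · intro p _; rw [add_comm]; exact Real.add_one_le_exp _
      _ = Real.exp (∑ p ∈ Pt, c/(p:ℝ)) := (Real.exp_sum _ _).symm
      _ ≤ Real.exp (Real.log t + c * B) := Real.exp_le_exp.2 hs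
      _ = t * Real.exp (c * B) := by rw [Real.exp_add, Real.exp_log ht0]
  -- Assemble
  have hmain : (F.card : ℝ) * E ≤ x * (t * Real.exp (c * B)) := by
    calc (F.card : ℝ) * E ≤ ∑ n ∈ Finset.Icc 1 N,
          (c+1)^((n.primeFactors.filter (fun p : ℕ => (p:ℝ) ≤ t)).card) := h1
      _ ≤ ∑ n ∈ Finset.Icc 1 N, ∑ d ∈ D.filter (· ∣ n), (c:ℝ)^(d.primeFactors.card) :=
          Finset.sum_le_sum h2
      _ = ∑ d ∈ D, (c:ℝ)^(d.primeFactors.card)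
          * (((Finset.Icc 1 N).filter (fun n => d ∣ n)).card : ℝ) := h3
      _ ≤ ∑ d ∈ D, (c:ℝ)^(d.primeFactors.card) * (x / d) := by
          apply Finset.sum_le_sum
          intro d hd
          exact mul_le_mul_of_nonneg_left (h4 d hd) (by positivity)
      _ = x * ∑ d ∈ D, (c:ℝ)^(d.primeFactors.card) / d := by
          rw [Finset.mul_sum]
          exact Finset.sum_congr rfl (fun d _ => by ring)
      _ ≤ x * ∏ p ∈ Pt, (1 + c/(p:ℝ)) := by
          apply mul_le_mul_of_nonneg_left h5 hx0
      _ ≤ x * (t * Real.exp (c * B)) := by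
          apply mul_le_mul_of_nonneg_left h6 hx0
  -- convert E to rpow and conclude
  have hErpow : E = t ^ ((C:ℝ)+1) := by
    rw [hE, Real.rpow_def_of_pos ht0, mul_comm]
  have htne : (t:ℝ) ^ ((C:ℝ)+1) ≠ 0 := by positivity
  have hpow : t ^ (-C) * t ^ ((C:ℝ)+1) = t := by
    rw [← Real.rpow_add ht0]
    have h9 : -C + (C+1) = (1:ℝ) := by ring
    rw [h9, Real.rpow_one]
  have hfinal : (F.card : ℝ) ≤ Real.exp (c * B) * x * t ^ (-C) := by
    rw [← le_div_iff₀ hEpos, hErpow] at hmain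
    refine le_trans hmain (le_of_eq ?_)
    rw [div_eq_iff htne, mul_assoc, hpow]
    ring
  exact hfinal
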